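/- Let K be a field, M a 4×4 matrix over K whose characteristic polynomial has the form t⁴ + bt² + ct + d (i.e., zero coefficient on t³), and suppose M has at most two eigenvalues in an algebraic closure of K, with char K ≠ 2, 3. Then: (a) if c = 0 then b² = 4d; (b) if b = 0 then c = 0. -/

import Mathlib

open Polynomial

lemma coeff_eqs {L : Type*} [Field L] (b c d a3 a2 a1 a0 : L)
    (h : X ^ 4 + C a3 * X ^ 3 + C a2 * X ^ 2 + C a1 * X + C a0 =
         X ^ 4 + C b * X ^ 2 + C c * X + C d) :
    a3 = 0 ∧ a2 = b ∧ a1 = c ∧ a0 = d := by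
  refine ⟨?_, ?_, ?_, ?_⟩
  · have := congrArg (fun q => coeff q 3) h
    simp only [coeff_add, coeff_C_mul, coeff_X_pow, coeff_X, coeff_C] at this
    norm_num at this
    linear_combination this
  · have := congrArg (fun q => coeff q 2) h
    simp only [coeff_add, coeff_C_mul, coeff_X_pow, coeff_X, coeff_C] at this
    norm_num at this
    linear_combination this
  · have := congrArg (fun q => coeff q 1) h
    simp only [coeff_add, coeff_C_mul, coeff_X_pow, coeff_X, coeff_C] at this
    norm_num at this
    linear_combination this
  · have := congrArg (fun q => coeff q 0) h
    simp only [coeff_add, coeff_C_mul, coeff_X_pow, coeff_X, coeff_C] at this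
    norm_num at this
    linear_combination this

lemma aux13 {L : Type*} [Field L] (h2 : (2 : L) ≠ 0) (h3 : (3 : L) ≠ 0)
    (b c d r s : L) (m n : ℕ) (hm : 1 ≤ m) (hmn : m + n = 4)
    (h : (X - C r) ^ m * (X - C s) ^ n = X ^ 4 + C b * X ^ 2 + C c * X + C d) :
    (c = 0 → b ^ 2 = 4 * d) ∧ (b = 0 → c = 0) := by
  have hs0 : ∀ x : L, x ^ 2 = 0 → x = 0 := fun x hx => by
    simpa using pow_eq_zero_iff (n := 2) (by norm_num) |>.mp hx
  have hs3 : ∀ x : L, x ^ 3 = 0 → x = 0 := fun x hx => by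
    simpa using pow_eq_zero_iff (n := 3) (by norm_num) |>.mp hx
  have hm4 : m ≤ 4 := by omega
  interval_cases m
  · -- m = 1, n = 3
    have hn : n = 3 := by omega
    subst hn
    rw [show (X - C r) ^ 1 * (X - C s) ^ 3 =
        X ^ 4 + C (-(r + 3*s)) * X ^ 3 + C (3*s^2 + 3*r*s) * X ^ 2 +
          C (-(s^3 + 3*r*s^2)) * X + C (r * s^3) by
      simp only [map_neg, map_add, map_mul, map_pow, map_ofNat]; ring] at h
    obtain ⟨e3, e2, e1, e0⟩ := coeff_eqs _ _ _ _ _ _ _ h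
    have hr : r = -3*s := by linear_combination -e3
    subst hr
    have hb : b = -6*s^2 := by linear_combination -e2
    have hc : c = 8*s^3 := by linear_combination -e1
    have hd : d = -3*s^4 := by linear_combination -e0
    constructor
    · intro h0
      have h8 : (2:L)^3 * s^3 = 0 := by rw [hc] at h0; linear_combination h0
      have hz : s = 0 := hs3 s (by
        rcases mul_eq_zero.mp h8 with h' | h'
        · exact absurd h' (pow_ne_zero 3 h2)
        · exact h')
      subst hz; rw [hb, hd]; ring
    · intro h0
      have h6 : (2:L) * 3 * s^2 = 0 := by rw [hb] at h0; linear_combination -h0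
      have hz : s = 0 := hs0 s (by
        rcases mul_eq_zero.mp h6 with h' | h'
        · exact absurd h' (mul_ne_zero h2 h3)
        · exact h')
      subst hz; rw [hc]; ring
  · -- m = 2, n = 2
    have hn : n = 2 := by omega
    subst hn
    rw [show (X - C r) ^ 2 * (X - C s) ^ 2 =
        X ^ 4 + C (-(2*r + 2*s)) * X ^ 3 + C (r^2 + 4*r*s + s^2) * X ^ 2 +
          C (-(2*r^2*s + 2*r*s^2)) * X + C (r^2 * s^2) by
      simp only [map_neg, map_add, map_mul, map_pow, map_ofNat]; ring] at h
    obtain ⟨e3, e2, e1, e0⟩ := coeff_eqs _ _ _ _ _ _ _ h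
    have hr : s = -r := by
      have h' : (2:L) * (r + s) = 0 := by linear_combination -e3
      rcases mul_eq_zero.mp h' with h' | h'
      · exact absurd h' h2
      · linear_combination h'
    subst hr
    have hb : b = -2*r^2 := by linear_combination -e2
    have hc : c = 0 := by linear_combination -e1
    have hd : d = r^4 := by linear_combination -e0
    exact ⟨fun _ => by rw [hb, hd]; ring, fun _ => hc⟩
  · -- m = 3, n = 1
    have hn : n = 1 := by omega
    subst hn
    rw [show (X - C r) ^ 3 * (X - C s) ^ 1 =
        X ^ 4 + C (-(3*r + s)) * X ^ 3 + C (3*r^2 + 3*r*s) * X ^ 2 +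
          C (-(r^3 + 3*r^2*s)) * X + C (r^3 * s) by
      simp only [map_neg, map_add, map_mul, map_pow, map_ofNat]; ring] at h
    obtain ⟨e3, e2, e1, e0⟩ := coeff_eqs _ _ _ _ _ _ _ h
    have hr : s = -3*r := by linear_combination -e3
    subst hr
    have hb : b = -6*r^2 := by linear_combination -e2
    have hc : c = 8*r^3 := by linear_combination -e1
    have hd : d = -3*r^4 := by linear_combination -e0
    constructor
    · intro h0
      have h8 : (2:L)^3 * r^3 = 0 := by rw [hc] at h0; linear_combination h0
      have hz : r = 0 := hs3 r (by
        rcases mul_eq_zero.mp h8 with h' | h'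
        · exact absurd h' (pow_ne_zero 3 h2)
        · exact h')
      subst hz; rw [hb, hd]; ring
    · intro h0
      have h6 : (2:L) * 3 * r^2 = 0 := by rw [hb] at h0; linear_combination -h0
      have hz : r = 0 := hs0 r (by
        rcases mul_eq_zero.mp h6 with h' | h'
        · exact absurd h' (mul_ne_zero h2 h3)
        · exact h')
      subst hz; rw [hc]; ring
  · -- m = 4, n = 0
    have hn : n = 0 := by omega
    subst hn
    rw [show (X - C r) ^ 4 * (X - C s) ^ 0 =
        X ^ 4 + C (-(4*r)) * X ^ 3 + C (6*r^2) * X ^ 2 +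
          C (-(4*r^3)) * X + C (r^4) by
      simp only [map_neg, map_add, map_mul, map_pow, map_ofNat]; ring] at h
    obtain ⟨e3, e2, e1, e0⟩ := coeff_eqs _ _ _ _ _ _ _ h
    have hz : r = 0 := by
      have h' : (2:L) * (2 * r) = 0 := by linear_combination -e3
      rcases mul_eq_zero.mp h' with h' | h'
      · exact absurd h' h2
      · rcases mul_eq_zero.mp h' with h'' | h''
        · exact absurd h'' h2
        · exact h''
    subst hz
    have hb : b = 0 := by linear_combination -e2
    have hc : c = 0 := by linear_combination -e1
    have hd : d = 0 := by linear_combination -e0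
    exact ⟨fun _ => by rw [hb, hd]; ring, fun _ => hc⟩

/-- Let `char K ≠ 2, 3` and `M` a `4×4` matrix with characteristic polynomial
`t⁴ + b t² + c t + d` having at most two distinct roots in an algebraic closure. Then
(a) `c = 0 → b² = 4d`; (b) `b = 0 → c = 0`. -/
theorem stmt13 {K : Type*} [Field K] (h2 : (2 : K) ≠ 0) (h3 : (3 : K) ≠ 0)
    (M : Matrix (Fin 4) (Fin 4) K) (b c d : K)
    (hcp : Matrix.charpoly M = X ^ 4 + C b * X ^ 2 + C c * X + C d)
    (hspec : {x : AlgebraicClosure K |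
        ((Matrix.charpoly M).map (algebraMap K (AlgebraicClosure K))).IsRoot x}.ncard ≤ 2) :
    (c = 0 → b ^ 2 = 4 * d) ∧ (b = 0 → c = 0) := by
  classical
  set L := AlgebraicClosure K
  set f := algebraMap K L with hf
  set p := (Matrix.charpoly M).map f with hpdef
  have hinj : Function.Injective f := (f : K →+* L).injective
  have hp : p = X ^ 4 + C (f b) * X ^ 2 + C (f c) * X + C (f d) := by
    rw [hpdef, hcp]
    simp [Polynomial.map_add, Polynomial.map_mul, Polynomial.map_pow, Polynomial.map_C,
      Polynomial.map_X]
  have hmonic : p.Monic := (Matrix.charpoly_monic M).map f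
  have hp0 : p ≠ 0 := hmonic.ne_zero
  have hdeg : p.natDegree = 4 := by
    rw [hpdef, (Matrix.charpoly_monic M).natDegree_map, Matrix.charpoly_natDegree_eq_dim]
    simp
  have hsplits : p.Splits := IsAlgClosed.splits p
  have hcard : p.roots.card = 4 := by
    rw [← hdeg]
    exact (splits_iff_card_roots.mp hsplits)
  have hprod : p = (Multiset.map (fun a => X - C a) p.roots).prod :=
    hsplits.eq_prod_roots_of_monic hmonic
  -- root set
  have hset : {x : L | p.IsRoot x} = ↑p.roots.toFinset := by
    ext x
    simp [Multiset.mem_toFinset, Polynomial.mem_roots', hp0, Polynomial.IsRoot]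
  have hfin : p.roots.toFinset.card ≤ 2 := by
    rw [hset, Set.ncard_coe_finset] at hspec
    exact hspec
  -- pick a root
  obtain ⟨r, hr⟩ : ∃ r, r ∈ p.roots := by
    rcases Multiset.card_pos_iff_exists_mem.mp (by rw [hcard]; norm_num) with ⟨r, hr⟩
    exact ⟨r, hr⟩
  have key : ∃ s m n, 1 ≤ m ∧ m + n = 4 ∧
      (X - C r) ^ m * (X - C s) ^ n = X ^ 4 + C (f b) * X ^ 2 + C (f c) * X + C (f d) := by
    by_cases hall : ∀ x ∈ p.roots, x = r
    · refine ⟨r, 4, 0, by norm_num, by norm_num, ?_⟩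
      have hrep : p.roots = Multiset.replicate 4 r := Multiset.eq_replicate.mpr ⟨hcard, hall⟩
      rw [← hp, hprod, hrep, Multiset.map_replicate, Multiset.prod_replicate, pow_zero, mul_one]
    · push_neg at hall
      obtain ⟨s, hs, hsr⟩ := hall
      -- toFinset = {r, s}
      have hsub : ({r, s} : Finset L) ⊆ p.roots.toFinset := by
        intro x hx
        simp only [Finset.mem_insert, Finset.mem_singleton] at hx
        rcases hx with rfl | rfl
        · exact Multiset.mem_toFinset.mpr hr
        · exact Multiset.mem_toFinset.mpr hs
      have hcard2 : ({r, s} : Finset L).card = 2 := by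
        rw [Finset.card_insert_of_notMem (by simpa using (Ne.symm hsr)), Finset.card_singleton]
      have heq : ({r, s} : Finset L) = p.roots.toFinset :=
        Finset.eq_of_subset_of_card_le hsub (by omega)
      have hrs : ∀ x ∈ p.roots, x = r ∨ x = s := by
        intro x hx
        have hx' : x ∈ p.roots.toFinset := Multiset.mem_toFinset.mpr hx
        rw [← heq] at hx'
        simpa using hx'
      -- decompose
      set t2 := p.roots.filter (fun x => ¬ x = r) with ht2
      have hdec : p.roots.filter (fun x => x = r) + t2 = p.roots :=
        Multiset.filter_add_not _ _
      have h1 : p.roots.filter (fun x => x = r) =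
          Multiset.replicate (p.roots.count r) r := by
        simpa [eq_comm] using Multiset.filter_eq p.roots r
      have h2' : t2 = Multiset.replicate t2.card s := by
        refine Multiset.eq_replicate.mpr ⟨rfl, fun x hx => ?_⟩
        rw [ht2, Multiset.mem_filter] at hx
        rcases hrs x hx.1 with rfl | rfl
        · exact absurd rfl hx.2
        · rfl
      refine ⟨s, p.roots.count r, t2.card, ?_, ?_, ?_⟩
      · exact Multiset.one_le_count_iff_mem.mpr hr
      · have hc' := congrArg Multiset.card hdec
        rw [Multiset.card_add, h1, Multiset.card_replicate, hcard] at hc'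
        exact hc'
      · have hsplit : (Multiset.map (fun a => X - C a) p.roots).prod =
            (X - C r) ^ p.roots.count r * (X - C s) ^ t2.card := by
          conv_lhs => rw [← hdec, h1, h2']
          rw [Multiset.map_add, Multiset.prod_add, Multiset.map_replicate,
            Multiset.map_replicate, Multiset.prod_replicate, Multiset.prod_replicate]
        rw [← hp]
        conv_rhs => rw [hprod]
        exact hsplit.symm
  obtain ⟨s, m, n, hm, hmn, heq⟩ := key
  have h2L : (2 : L) ≠ 0 := fun hh => h2 (hinj (by rw [map_ofNat, map_zero]; exact hh))
  have h3L : (3 : L) ≠ 0 := fun hh => h3 (hinj (by rw [map_ofNat, map_zero]; exact hh))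
  obtain ⟨ha, hb⟩ := aux13 h2L h3L (f b) (f c) (f d) r s m n hm hmn heq
  constructor
  · intro hc0
    apply hinj
    have hba : (f b) ^ 2 = 4 * f d := ha (by rw [hc0]; simp)
    rw [map_pow, map_mul, map_ofNat]
    simpa using hba
  · intro hb0
    apply hinj
    have hca : f c = 0 := hb (by rw [hb0]; simp)
    simpa using hca
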